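/- Let n, d ∈ ℕ and let k be an integer with c(Q_n) ≤ k and k < 2^n / (∑_{i=0}^d C(n, i)). Then capt_k(Q_n) > d. -/

import Mathlib

open SimpleGraph Finset

/-- One step of a player in a reflexive graph: stay put (the loop) or move along an edge. -/
def stepRel {V : Type*} (G : SimpleGraph V) (u v : V) : Prop := u = v ∨ G.Adj u v

/-- `CatchIn G t c r`: with the cops currently at positions `c` and the robber at `r`
(cops to move next), the cops can guarantee to capture the robber within `t` further
rounds (a round consists of a cops' move followed by a robber's move; capture means
some cop occupies the robber's vertex). -/
def CatchIn {V : Type*} (G : SimpleGraph V) {k : ℕ} : ℕ → (Fin k → V) → V → Prop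
  | 0, c, r => ∃ i, c i = r
  | (t + 1), c, r => (∃ i, c i = r) ∨
      ∃ c' : Fin k → V, (∀ i, stepRel G (c i) (c' i)) ∧
        ((∃ i, c' i = r) ∨ ∀ r', stepRel G r r' → CatchIn G t c' r')

/-- `k` cops have a strategy capturing the robber within `t` rounds (not counting
round 0, in which the cops choose starting positions and then the robber, knowing
the cops' positions, chooses hers). -/
def CopsWinIn {V : Type*} (G : SimpleGraph V) (k t : ℕ) : Prop :=
  ∃ c₀ : Fin k → V, ∀ r₀ : V, CatchIn G t c₀ r₀

/-- The cop number: the least `k` such that `k` cops have a winning strategy. -/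
noncomputable def copNumber {V : Type*} (G : SimpleGraph V) : ℕ :=
  sInf {k | ∃ t, CopsWinIn G k t}

/-- The `k`-capture time: the least `t` such that `k` cops can guarantee capture
within `t` rounds. -/
noncomputable def captTime {V : Type*} (G : SimpleGraph V) (k : ℕ) : ℕ :=
  sInf {t | CopsWinIn G k t}

/-- The metric `k`-center radius: the least `r` such that some set of at most `k`
vertices is within distance `r` of every vertex. -/
noncomputable def radK {V : Type*} (G : SimpleGraph V) (k : ℕ) : ℕ :=
  sInf {r | ∃ S : Finset V, S.Nonempty ∧ S.card ≤ k ∧ ∀ v, ∃ s ∈ S, G.dist v s ≤ r}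

/-- `H ⊆ V(G)` induces a retract of the reflexive graph `G`: there is a map
`f : V(G) → H` fixing `H` pointwise such that every edge `uv` of `G` is sent to a
single vertex or to an edge. -/
def IsRetract {V : Type*} (G : SimpleGraph V) (H : Set V) : Prop :=
  ∃ f : V → V, (∀ v, f v ∈ H) ∧ (∀ v ∈ H, f v = v) ∧
    ∀ u v, G.Adj u v → f u = f v ∨ G.Adj (f u) (f v)

/-- The hypercube `Q n`: vertices are binary strings of length `n`, adjacent iff they
differ in exactly one coordinate (loops at every vertex are implicit). -/
def hypercube (n : ℕ) : SimpleGraph (Fin n → Bool) :=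
  SimpleGraph.fromRel (fun u v => ∃ j, u j ≠ v j ∧ ∀ i, i ≠ j → u i = v i)

lemma catchIn_succ {V : Type*} (G : SimpleGraph V) {k : ℕ} :
    ∀ t (c : Fin k → V) r, CatchIn G t c r → CatchIn G (t + 1) c r := by
  intro t
  induction t with
  | zero => intro c r h; exact Or.inl h
  | succ t ih =>
    intro c r h
    rcases h with h | ⟨c', hs, h⟩
    · exact Or.inl h
    · refine Or.inr ⟨c', hs, ?_⟩
      rcases h with h | h
      · exact Or.inl h
      · exact Or.inr fun r' hr => ih c' r' (h r' hr)

lemma catchIn_mono {V : Type*} (G : SimpleGraph V) {k : ℕ} {t t' : ℕ} (h : t ≤ t')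
    (c : Fin k → V) (r : V) (hc : CatchIn G t c r) : CatchIn G t' c r := by
  induction t' with
  | zero => exact Nat.le_zero.mp h ▸ hc
  | succ t' ih =>
    rcases Nat.lt_or_ge t (t' + 1) with h' | h'
    · exact catchIn_succ G t' c r (ih (by omega))
    · have : t = t' + 1 := by omega
      subst this; exact hc

lemma catchIn_comp {V : Type*} (G : SimpleGraph V) {k k' : ℕ} (σ : Fin k → Fin k')
    (hσ : Function.Surjective σ) :
    ∀ t (c : Fin k' → V) r, CatchIn G t c r → CatchIn G t (c ∘ σ) r := by
  intro t
  induction t with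
  | zero => rintro c r ⟨i, hi⟩; obtain ⟨j, rfl⟩ := hσ i; exact ⟨j, hi⟩
  | succ t ih =>
    rintro c r (⟨i, hi⟩ | ⟨c', hs, h⟩)
    · obtain ⟨j, rfl⟩ := hσ i; exact Or.inl ⟨j, hi⟩
    · refine Or.inr ⟨c' ∘ σ, fun j => hs (σ j), ?_⟩
      rcases h with ⟨i, hi⟩ | h
      · obtain ⟨j, rfl⟩ := hσ i; exact Or.inl ⟨j, hi⟩
      · exact Or.inr fun r' hr => ih c' r' (h r' hr)

lemma hypercube_adj_hamming {n : ℕ} {u v : Fin n → Bool} (h : (hypercube n).Adj u v) :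
    hammingDist u v ≤ 1 := by
  rcases h with ⟨hne, h | h⟩ <;> obtain ⟨j, hj, hall⟩ := h <;>
  · rw [hammingDist]
    refine le_trans (Finset.card_le_card (fun i hi => ?_)) (le_of_eq (Finset.card_singleton j))
    simp only [Finset.mem_filter, Finset.mem_univ, true_and] at hi
    simp only [Finset.mem_singleton]
    by_contra hij
    exact hi ((by first | exact hall i hij | exact (hall i hij).symm))

lemma stepRel_hamming {n : ℕ} {u v : Fin n → Bool} (h : stepRel (hypercube n) u v) :
    hammingDist u v ≤ 1 := by
  rcases h with rfl | h
  · simp [hammingDist_self]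
  · exact hypercube_adj_hamming h

lemma catchIn_hamming {n k : ℕ} :
    ∀ t (c : Fin k → (Fin n → Bool)) r, CatchIn (hypercube n) t c r →
      ∃ i, hammingDist (c i) r ≤ t := by
  intro t
  induction t with
  | zero => rintro c r ⟨i, hi⟩; exact ⟨i, by simp [hi]⟩
  | succ t ih =>
    rintro c r (⟨i, hi⟩ | ⟨c', hs, h⟩)
    · exact ⟨i, by simp [hi]⟩
    · rcases h with ⟨i, hi⟩ | h
      · refine ⟨i, le_trans (hammingDist_triangle _ (c' i) _) ?_⟩
        have := stepRel_hamming (hs i)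
        simp [hi] at *
        omega
      · obtain ⟨i, hi⟩ := ih c' r (h r (Or.inl rfl))
        refine ⟨i, le_trans (hammingDist_triangle _ (c' i) _) ?_⟩
        have := stepRel_hamming (hs i)
        omega

lemma sphere_card_le {n : ℕ} (u : Fin n → Bool) (i : ℕ) :
    ({v | hammingDist u v = i} : Finset (Fin n → Bool)).card ≤ n.choose i := by
  classical
  have := Finset.card_le_card_of_injOn (s := ({v | hammingDist u v = i} : Finset (Fin n → Bool)))
    (f := fun v : Fin n → Bool => ({j | u j ≠ v j} : Finset (Fin n)))
    (t := Finset.powersetCard i Finset.univ) ?_ ?_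
  · simpa using this
  · intro v hv
    simp only [Finset.mem_coe, Finset.mem_filter, Finset.mem_univ, true_and] at hv ⊢
    rw [Finset.mem_powersetCard]
    exact ⟨Finset.subset_univ _, hv⟩
  · intro v hv w hw hvw
    funext j
    have := Finset.ext_iff.mp hvw j
    simp only [Finset.mem_filter, Finset.mem_univ, true_and] at this
    cases hu : u j <;> cases hv' : v j <;> cases hw' : w j <;> simp_all

lemma ball_card_le {n : ℕ} (u : Fin n → Bool) (d : ℕ) :
    ({v | hammingDist u v ≤ d} : Finset (Fin n → Bool)).card ≤
      ∑ i ∈ Finset.range (d + 1), n.choose i := by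
  classical
  have hsub : ({v | hammingDist u v ≤ d} : Finset (Fin n → Bool)) ⊆
      (Finset.range (d + 1)).biUnion (fun i => ({v | hammingDist u v = i} : Finset (Fin n → Bool))) := by
    intro v hv
    simp only [Finset.mem_filter, Finset.mem_univ, true_and] at hv
    simp only [Finset.mem_biUnion, Finset.mem_range, Finset.mem_filter, Finset.mem_univ, true_and]
    exact ⟨hammingDist u v, by omega, rfl⟩
  calc _ ≤ _ := Finset.card_le_card hsub
    _ ≤ ∑ i ∈ Finset.range (d + 1), ({v | hammingDist u v = i} : Finset (Fin n → Bool)).card :=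
        Finset.card_biUnion_le
    _ ≤ _ := Finset.sum_le_sum fun i _ => sphere_card_le u i

lemma catchIn_zero_cops {V : Type*} (G : SimpleGraph V) :
    ∀ t (c : Fin 0 → V) r, ¬ CatchIn G t c r := by
  intro t
  induction t with
  | zero => rintro c r ⟨i, -⟩; exact i.elim0
  | succ t ih =>
    rintro c r (⟨i, -⟩ | ⟨c', hs, h⟩)
    · exact i.elim0
    · rcases h with ⟨i, -⟩ | h
      · exact i.elim0
      · exact ih c' r (h r (Or.inl rfl))

/-- Lower bound on the capture time of hypercubes with many cops: if
`c(Q_n) ≤ k < 2^n / ∑_{i=0}^d C(n,i)`, then `capt_k(Q_n) > d`. -/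
theorem captTime_hypercube_lower_large (n d k : ℕ)
    (hk : copNumber (hypercube n) ≤ k)
    (hk' : (k : ℝ) < (2 : ℝ) ^ n / ∑ i ∈ Finset.range (d + 1), (n.choose i : ℝ)) :
    d < captTime (hypercube n) k := by
  classical
  -- the winning set is nonempty: 2^n cops win in 0 rounds
  have hcard : Fintype.card (Fin n → Bool) = 2 ^ n := by simp
  let e := (Fintype.equivFinOfCardEq hcard).symm
  have hwin : CopsWinIn (hypercube n) (2 ^ n) 0 :=
    ⟨e, fun r₀ => ⟨e.symm r₀, e.apply_symm_apply r₀⟩⟩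
  have hne : {k | ∃ t, CopsWinIn (hypercube n) k t}.Nonempty := ⟨2 ^ n, 0, hwin⟩
  have hmem' : ∃ t, CopsWinIn (hypercube n) (copNumber (hypercube n)) t := Nat.sInf_mem hne
  obtain ⟨t₀, hw0⟩ := hmem'
  set k' := copNumber (hypercube n) with hk'def
  have h0 : ∀ t, ¬ CopsWinIn (hypercube n) 0 t := by
    rintro t ⟨c₀, h⟩
    exact catchIn_zero_cops (hypercube n) t c₀ (fun _ => false) (h _)
  have hk'pos : 1 ≤ k' := by
    by_contra h
    have hk0 : k' = 0 := by omega
    exact h0 t₀ (hk0 ▸ hw0)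
  obtain ⟨c₀, hw⟩ := hw0
  -- transfer to k cops
  have hkk : k' ≤ k := hk
  let σ : Fin k → Fin k' := fun i => ⟨min i.val (k' - 1), by omega⟩
  have hσ : Function.Surjective σ := by
    intro j
    refine ⟨⟨j.val, by omega⟩, ?_⟩
    have := j.isLt
    simp only [σ]
    ext
    simp
    omega
  have hwk : CopsWinIn (hypercube n) k t₀ :=
    ⟨c₀ ∘ σ, fun r₀ => catchIn_comp (hypercube n) σ hσ t₀ c₀ r₀ (hw r₀)⟩
  -- suppose captTime ≤ d, get a strategy winning in d rounds
  by_contra hle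
  push_neg at hle
  have hTne : {t | CopsWinIn (hypercube n) k t}.Nonempty := ⟨t₀, hwk⟩
  have hmem := Nat.sInf_mem hTne
  have hlt : sInf {t | CopsWinIn (hypercube n) k t} ≤ d := hle
  obtain ⟨c, hc⟩ := hmem
  have hcd : ∀ r₀ : Fin n → Bool, CatchIn (hypercube n) d c r₀ :=
    fun r₀ => catchIn_mono (hypercube n) hlt c r₀ (hc r₀)
  -- counting
  have hcover : (Finset.univ : Finset (Fin n → Bool)) ⊆
      (Finset.univ : Finset (Fin k)).biUnion
        (fun i => ({v | hammingDist (c i) v ≤ d} : Finset (Fin n → Bool))) := by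
    intro r _hr
    obtain ⟨i, hi⟩ := catchIn_hamming d c r (hcd r)
    simp only [Finset.mem_biUnion, Finset.mem_filter, Finset.mem_univ, true_and]
    exact ⟨i, hi⟩
  have hB : ∀ i : Fin k, ({v | hammingDist (c i) v ≤ d} : Finset (Fin n → Bool)).card ≤
      ∑ j ∈ Finset.range (d + 1), n.choose j := fun i => ball_card_le (c i) d
  have hcount : 2 ^ n ≤ k * ∑ j ∈ Finset.range (d + 1), n.choose j := by
    calc 2 ^ n = (Finset.univ : Finset (Fin n → Bool)).card := by
          rw [Finset.card_univ, hcard]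
      _ ≤ _ := Finset.card_le_card hcover
      _ ≤ ∑ i : Fin k, ({v | hammingDist (c i) v ≤ d} : Finset (Fin n → Bool)).card :=
          Finset.card_biUnion_le
      _ ≤ ∑ _i : Fin k, ∑ j ∈ Finset.range (d + 1), n.choose j :=
          Finset.sum_le_sum fun i _ => hB i
      _ = k * ∑ j ∈ Finset.range (d + 1), n.choose j := by
          rw [Finset.sum_const, Finset.card_univ, Fintype.card_fin, smul_eq_mul]
  -- contradiction with hk'
  have hBpos : (0 : ℝ) < ∑ i ∈ Finset.range (d + 1), (n.choose i : ℝ) := by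
    have h1 : 1 ≤ ∑ i ∈ Finset.range (d + 1), n.choose i := by
      calc 1 = n.choose 0 := (Nat.choose_zero_right n).symm
        _ ≤ _ := Finset.single_le_sum (f := fun i => n.choose i)
              (fun _ _ => Nat.zero_le _) (Finset.mem_range.mpr (by omega))
    have := (Nat.one_le_cast (α := ℝ)).mpr h1
    push_cast at this ⊢
    linarith
  rw [lt_div_iff₀ hBpos] at hk'
  have : ((2 : ℝ)) ^ n ≤ (k : ℝ) * ∑ i ∈ Finset.range (d + 1), (n.choose i : ℝ) := by
    have := (Nat.cast_le (α := ℝ)).mpr hcount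
    push_cast at this
    linarith
  linarith
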